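/- arXiv:1509.03869 — 2 statements merged into one kernel-verified Lean document; each statement's English description precedes it below -/
import Mathlib

section
/- The algebra O_nc(GL₂) = k⟨a,b,c,d,δ^{±1}⟩/I (with I generated by ac−ca, bd−db, ad−cb−δ, da−bc−δ, δδ^{-1}−1, δ^{-1}δ−1, aδ^{-1}d−bδ^{-1}c−1, dδ^{-1}a−cδ^{-1}b−1, bδ^{-1}a−aδ^{-1}b, cδ^{-1}d−dδ^{-1}c) carries a Hopf algebra structure where Δ(a)=a⊗a+b⊗c, Δ(b)=a⊗b+b⊗d, Δ(c)=c⊗a+d⊗c, Δ(d)=c⊗b+d⊗d, Δ(δ^{±1})=δ^{±1}⊗δ^{±1}, ε(a)=ε(d)=1, ε(b)=ε(c)=0, ε(δ^{±1})=1, and antipode S(a)=δ^{-1}d, S(b)=−δ^{-1}b, S(c)=−δ^{-1}c, S(d)=δ^{-1}a, S(δ^{±1})=δ^{∓1}. In particular S is a well-defined algebra anti-homomorphism and satisfies the antipode axioms on generators. -/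
open TensorProduct

/-- The six generators `a, b, c, d, δ, δ⁻¹` of `O_nc(GL₂)`. -/
inductive GL2Gen : Type
  | a : GL2Gen
  | b : GL2Gen
  | c : GL2Gen
  | d : GL2Gen
  | del : GL2Gen
  | delInv : GL2Gen
  deriving DecidableEq

open GL2Gen

namespace GL2Rel

variable (k : Type) [Field k]

local notation "ι" => FreeAlgebra.ι k (X := GL2Gen)

/-- The defining relations of `O_nc(GL₂)`. -/
inductive rel : FreeAlgebra k GL2Gen → FreeAlgebra k GL2Gen → Prop
  | ac_comm : rel (ι a * ι c) (ι c * ι a)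
  | bd_comm : rel (ι b * ι d) (ι d * ι b)
  | det1 : rel (ι a * ι d - ι c * ι b) (ι del)
  | det2 : rel (ι d * ι a - ι b * ι c) (ι del)
  | delInv1 : rel (ι del * ι delInv) 1
  | delInv2 : rel (ι delInv * ι del) 1
  | anti1 : rel (ι a * ι delInv * ι d - ι b * ι delInv * ι c) 1
  | anti2 : rel (ι d * ι delInv * ι a - ι c * ι delInv * ι b) 1
  | anti3 : rel (ι b * ι delInv * ι a - ι a * ι delInv * ι b) 0
  | anti4 : rel (ι c * ι delInv * ι d - ι d * ι delInv * ι c) 0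

end GL2Rel

/-- The algebra `O_nc(GL₂)`. -/
abbrev OncGL2 (k : Type) [Field k] : Type := RingQuot (GL2Rel.rel k)

/-- The images of the generators in `O_nc(GL₂)`. -/
noncomputable def gg (k : Type) [Field k] (g : GL2Gen) : OncGL2 k :=
  RingQuot.mkAlgHom k (GL2Rel.rel k) (FreeAlgebra.ι k g)

noncomputable section GL2HopfAux

namespace GL2HopfAux

open GL2Gen TensorProduct

variable (k : Type) [Field k]

local notation "GA" => gg k GL2Gen.a
local notation "GB" => gg k GL2Gen.b
local notation "GC" => gg k GL2Gen.c
local notation "GD" => gg k GL2Gen.d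
local notation "GE" => gg k GL2Gen.del
local notation "GF" => gg k GL2Gen.delInv

theorem rel_eq {x y} (h : GL2Rel.rel k x y) :
    RingQuot.mkAlgHom k (GL2Rel.rel k) x = RingQuot.mkAlgHom k (GL2Rel.rel k) y :=
  RingQuot.mkAlgHom_rel k h

theorem h1 : GA * GC = GC * GA := by
  simpa [gg] using rel_eq k GL2Rel.rel.ac_comm

theorem h2 : GB * GD = GD * GB := by
  simpa [gg] using rel_eq k GL2Rel.rel.bd_comm

theorem h3 : GA * GD - GC * GB = GE := by
  simpa [gg] using rel_eq k GL2Rel.rel.det1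

theorem h4 : GD * GA - GB * GC = GE := by
  simpa [gg] using rel_eq k GL2Rel.rel.det2

theorem h5 : GE * GF = 1 := by
  simpa [gg] using rel_eq k GL2Rel.rel.delInv1

theorem h6 : GF * GE = 1 := by
  simpa [gg] using rel_eq k GL2Rel.rel.delInv2

theorem h7 : GA * (GF * GD) - GB * (GF * GC) = 1 := by
  simpa [gg, mul_assoc] using rel_eq k GL2Rel.rel.anti1

theorem h8 : GD * (GF * GA) - GC * (GF * GB) = 1 := by
  simpa [gg, mul_assoc] using rel_eq k GL2Rel.rel.anti2

theorem h9 : GB * (GF * GA) = GA * (GF * GB) := by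
  have := rel_eq k GL2Rel.rel.anti3
  simp only [gg, map_sub, map_mul, map_zero, sub_eq_zero] at this ⊢
  simpa [gg, mul_assoc] using this

theorem h10 : GC * (GF * GD) = GD * (GF * GC) := by
  have := rel_eq k GL2Rel.rel.anti4
  simp only [gg, map_sub, map_mul, map_zero, sub_eq_zero] at this ⊢
  simpa [gg, mul_assoc] using this

theorem h3' : GA * GD = GC * GB + GE := sub_eq_iff_eq_add'.mp (h3 k)
theorem h4' : GD * GA = GB * GC + GE := sub_eq_iff_eq_add'.mp (h4 k)
theorem h7' : GA * (GF * GD) = GB * (GF * GC) + 1 := sub_eq_iff_eq_add'.mp (h7 k)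
theorem h8' : GD * (GF * GA) = GC * (GF * GB) + 1 := sub_eq_iff_eq_add'.mp (h8 k)

theorem EF (x : OncGL2 k) : GE * (GF * x) = x := by
  rw [← mul_assoc, h5, one_mul]


/-! ### Specialized arithmetic lemmas (to work around `RingQuot` instance issues) -/

theorem Hneg_mul (x y : OncGL2 k) : -x * y = -(x * y) := neg_mul x y
theorem Hmul_neg (x y : OncGL2 k) : x * -y = -(x * y) := mul_neg x y
theorem Hneg_neg (x : OncGL2 k) : - -x = x := neg_neg x
theorem Hmul_assoc (x y z : OncGL2 k) : x * y * z = x * (y * z) := mul_assoc x y z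
theorem Hadd_neg (x y : OncGL2 k) : x + -y = x - y := (sub_eq_add_neg x y).symm
theorem Hmul_sub (x y z : OncGL2 k) : x * (y - z) = x * y - x * z := mul_sub x y z
theorem Hmul_add (x y z : OncGL2 k) : x * (y + z) = x * y + x * z := mul_add x y z
theorem Hsub_self (x : OncGL2 k) : x - x = 0 := sub_self x
theorem Hneg_add_cancel (x : OncGL2 k) : -x + x = 0 := neg_add_cancel x
theorem Hadd_neg_cancel (x : OncGL2 k) : x + -x = 0 := add_neg_cancel x
theorem Hneg_add_cancel_left (x y : OncGL2 k) : -x + (x + y) = y := neg_add_cancel_left x y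
theorem Hmul_one (x : OncGL2 k) : x * 1 = x := mul_one x
theorem Hone_mul (x : OncGL2 k) : 1 * x = x := one_mul x
theorem Hmul_zero (x : OncGL2 k) : x * 0 = 0 := mul_zero x

/-! ### Comultiplication -/

def Δval : GL2Gen → OncGL2 k ⊗[k] OncGL2 k
  | GL2Gen.a => GA ⊗ₜ GA + GB ⊗ₜ GC
  | GL2Gen.b => GA ⊗ₜ GB + GB ⊗ₜ GD
  | GL2Gen.c => GC ⊗ₜ GA + GD ⊗ₜ GC
  | GL2Gen.d => GC ⊗ₜ GB + GD ⊗ₜ GD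
  | GL2Gen.del => GE ⊗ₜ GE
  | GL2Gen.delInv => GF ⊗ₜ GF

def Δfree : FreeAlgebra k GL2Gen →ₐ[k] OncGL2 k ⊗[k] OncGL2 k :=
  FreeAlgebra.lift k (Δval k)

theorem Δrel : ∀ ⦃x y⦄, GL2Rel.rel k x y → Δfree k x = Δfree k y := by
  intro x y h
  induction h <;>
    simp only [Δfree, map_mul, map_sub, map_one, map_zero, FreeAlgebra.lift_ι_apply, Δval] <;>
    simp only [mul_add, add_mul, Algebra.TensorProduct.tmul_mul_tmul, mul_assoc]
  case ac_comm =>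
    rw [h1, h2, h3', h4']
    simp only [TensorProduct.add_tmul, TensorProduct.tmul_add]
    abel
  case bd_comm =>
    rw [h1, h2, h3', h4']
    simp only [TensorProduct.add_tmul, TensorProduct.tmul_add]
    abel
  case det1 =>
    rw [h1, h2, h3', h4']
    simp only [TensorProduct.add_tmul, TensorProduct.tmul_add]
    abel
  case det2 =>
    rw [h1, h2, h3', h4']
    simp only [TensorProduct.add_tmul, TensorProduct.tmul_add]
    abel
  case delInv1 =>
    rw [h5]
    simp [Algebra.TensorProduct.one_def]
  case delInv2 =>
    rw [h6]
    simp [Algebra.TensorProduct.one_def]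
  case anti1 =>
    rw [h7', h8', h9, h10]
    simp only [TensorProduct.add_tmul, TensorProduct.tmul_add, Algebra.TensorProduct.one_def]
    abel
  case anti2 =>
    rw [h7', h8', h9, h10]
    simp only [TensorProduct.add_tmul, TensorProduct.tmul_add, Algebra.TensorProduct.one_def]
    abel
  case anti3 =>
    rw [h7', h8', h9, h10]
    simp only [TensorProduct.add_tmul, TensorProduct.tmul_add]
    abel
  case anti4 =>
    rw [h7', h8', h9, h10]
    simp only [TensorProduct.add_tmul, TensorProduct.tmul_add]
    abel

def ΔH : OncGL2 k →ₐ[k] OncGL2 k ⊗[k] OncGL2 k :=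
  RingQuot.liftAlgHom k ⟨Δfree k, Δrel k⟩

theorem ΔH_gg (g : GL2Gen) : ΔH k (gg k g) = Δval k g := by
  simp [ΔH, gg, RingQuot.liftAlgHom_mkAlgHom_apply, Δfree]

/-! ### Counit -/

def εval : GL2Gen → k
  | GL2Gen.b => 0
  | GL2Gen.c => 0
  | _ => 1

def εfree : FreeAlgebra k GL2Gen →ₐ[k] k :=
  FreeAlgebra.lift k (εval k)

theorem εrel : ∀ ⦃x y⦄, GL2Rel.rel k x y → εfree k x = εfree k y := by
  intro x y h
  induction h <;>
    simp [εfree, εval]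

def εH : OncGL2 k →ₐ[k] k :=
  RingQuot.liftAlgHom k ⟨εfree k, εrel k⟩

theorem εH_gg (g : GL2Gen) : εH k (gg k g) = εval k g := by
  simp [εH, gg, RingQuot.liftAlgHom_mkAlgHom_apply, εfree]

/-! ### Antipode -/

def Sval : GL2Gen → (OncGL2 k)ᵐᵒᵖ
  | GL2Gen.a => .op (GF * GD)
  | GL2Gen.b => .op (-(GF * GB))
  | GL2Gen.c => .op (-(GF * GC))
  | GL2Gen.d => .op (GF * GA)
  | GL2Gen.del => .op GF
  | GL2Gen.delInv => .op GE

def Sfree : FreeAlgebra k GL2Gen →ₐ[k] (OncGL2 k)ᵐᵒᵖ :=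
  FreeAlgebra.lift k (Sval k)

theorem Srel : ∀ ⦃x y⦄, GL2Rel.rel k x y → Sfree k x = Sfree k y := by
  have expand : ∀ x : FreeAlgebra k GL2Gen, True := fun _ => trivial
  intro x y h
  induction h with
  | ac_comm =>
    apply MulOpposite.unop_injective
    simp only [Sfree, map_mul, FreeAlgebra.lift_ι_apply, Sval, MulOpposite.unop_mul,
      MulOpposite.unop_op, Hneg_mul, Hmul_neg, Hneg_neg, Hmul_assoc, EF]
    rw [h10]
  | bd_comm =>
    apply MulOpposite.unop_injective
    simp only [Sfree, map_mul, FreeAlgebra.lift_ι_apply, Sval, MulOpposite.unop_mul,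
      MulOpposite.unop_op, Hneg_mul, Hmul_neg, Hneg_neg, Hmul_assoc, EF]
    rw [h9]
  | det1 =>
    apply MulOpposite.unop_injective
    simp only [Sfree, map_mul, map_sub, FreeAlgebra.lift_ι_apply, Sval, MulOpposite.unop_mul,
      MulOpposite.unop_sub, MulOpposite.unop_op, Hneg_mul, Hmul_neg, Hneg_neg, Hmul_assoc, EF]
    rw [← Hmul_sub, h7, Hmul_one]
  | det2 =>
    apply MulOpposite.unop_injective
    simp only [Sfree, map_mul, map_sub, FreeAlgebra.lift_ι_apply, Sval, MulOpposite.unop_mul,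
      MulOpposite.unop_sub, MulOpposite.unop_op, Hneg_mul, Hmul_neg, Hneg_neg, Hmul_assoc, EF]
    rw [← Hmul_sub, h8, Hmul_one]
  | delInv1 =>
    apply MulOpposite.unop_injective
    simp only [Sfree, map_mul, map_one, FreeAlgebra.lift_ι_apply, Sval, MulOpposite.unop_mul,
      MulOpposite.unop_op, MulOpposite.unop_one]
    exact h5 k
  | delInv2 =>
    apply MulOpposite.unop_injective
    simp only [Sfree, map_mul, map_one, FreeAlgebra.lift_ι_apply, Sval, MulOpposite.unop_mul,
      MulOpposite.unop_op, MulOpposite.unop_one]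
    exact h6 k
  | anti1 =>
    apply MulOpposite.unop_injective
    simp only [Sfree, map_mul, map_sub, map_one, FreeAlgebra.lift_ι_apply, Sval,
      MulOpposite.unop_mul, MulOpposite.unop_sub, MulOpposite.unop_op, MulOpposite.unop_one,
      Hneg_mul, Hmul_neg, Hneg_neg, Hmul_assoc, EF]
    rw [← Hmul_sub, h3, h6]
  | anti2 =>
    apply MulOpposite.unop_injective
    simp only [Sfree, map_mul, map_sub, map_one, FreeAlgebra.lift_ι_apply, Sval,
      MulOpposite.unop_mul, MulOpposite.unop_sub, MulOpposite.unop_op, MulOpposite.unop_one,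
      Hneg_mul, Hmul_neg, Hneg_neg, Hmul_assoc, EF]
    rw [← Hmul_sub, h4, h6]
  | anti3 =>
    apply MulOpposite.unop_injective
    simp only [Sfree, map_mul, map_sub, map_zero, FreeAlgebra.lift_ι_apply, Sval,
      MulOpposite.unop_mul, MulOpposite.unop_sub, MulOpposite.unop_op, MulOpposite.unop_zero,
      Hneg_mul, Hmul_neg, Hneg_neg, Hmul_assoc, EF]
    rw [h2]
    abel
  | anti4 =>
    apply MulOpposite.unop_injective
    simp only [Sfree, map_mul, map_sub, map_zero, FreeAlgebra.lift_ι_apply, Sval,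
      MulOpposite.unop_mul, MulOpposite.unop_sub, MulOpposite.unop_op, MulOpposite.unop_zero,
      Hneg_mul, Hmul_neg, Hneg_neg, Hmul_assoc, EF]
    rw [h1]
    abel

def SopH : OncGL2 k →ₐ[k] (OncGL2 k)ᵐᵒᵖ :=
  RingQuot.liftAlgHom k ⟨Sfree k, Srel k⟩

def SH : OncGL2 k →ₗ[k] OncGL2 k :=
  (MulOpposite.opLinearEquiv k).symm.toLinearMap ∘ₗ (SopH k).toLinearMap

theorem SH_gg (g : GL2Gen) : SH k (gg k g) = (Sval k g).unop := by
  simp [SH, SopH, gg, RingQuot.liftAlgHom_mkAlgHom_apply, Sfree]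

theorem SH_one : SH k 1 = 1 := by
  simp [SH]

theorem SH_anti (x y : OncGL2 k) : SH k (x * y) = SH k y * SH k x := by
  simp [SH]

theorem SH_algebraMap (r : k) : SH k (algebraMap k (OncGL2 k) r) = algebraMap k (OncGL2 k) r := by
  rw [Algebra.algebraMap_eq_smul_one, map_smul, SH_one]

/-! ### Induction principle -/

theorem hopf_induction {P : OncGL2 k → Prop}
    (halg : ∀ r : k, P (algebraMap k (OncGL2 k) r))
    (hgen : ∀ g, P (gg k g))
    (hadd : ∀ x y, P x → P y → P (x + y))
    (hmul : ∀ x y, P x → P y → P (x * y)) : ∀ x, P x := by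
  intro x
  obtain ⟨y, rfl⟩ := RingQuot.mkAlgHom_surjective k (GL2Rel.rel k) x
  induction y with
  | grade0 r => rw [AlgHom.commutes]; exact halg r
  | grade1 g => exact hgen g
  | mul u v hu hv => rw [map_mul]; exact hmul _ _ hu hv
  | add u v hu hv => rw [map_add]; exact hadd _ _ hu hv

/-! ### Bridging lemmas -/

theorem tmap_eq {A₁ A₂ B₁ B₂ : Type} [Semiring A₁] [Semiring A₂] [Semiring B₁] [Semiring B₂]
    [Algebra k A₁] [Algebra k A₂] [Algebra k B₁] [Algebra k B₂]
    (f : A₁ →ₐ[k] B₁) (g : A₂ →ₐ[k] B₂) :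
    TensorProduct.map f.toLinearMap g.toLinearMap = (Algebra.TensorProduct.map f g).toLinearMap :=
  TensorProduct.ext' fun _ _ => rfl

/-! ### Coassociativity -/

theorem coassoc : ∀ x, (TensorProduct.assoc k (OncGL2 k) (OncGL2 k) (OncGL2 k))
      (TensorProduct.map (ΔH k).toLinearMap LinearMap.id (ΔH k x))
    = TensorProduct.map LinearMap.id (ΔH k).toLinearMap (ΔH k x) := by
  have e1 : TensorProduct.map (ΔH k).toLinearMap LinearMap.id
      = (Algebra.TensorProduct.map (ΔH k) (AlgHom.id k (OncGL2 k))).toLinearMap := by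
    rw [← AlgHom.toLinearMap_id (R := k) (A := OncGL2 k)]; exact tmap_eq k _ _
  have e2 : TensorProduct.map LinearMap.id (ΔH k).toLinearMap
      = (Algebra.TensorProduct.map (AlgHom.id k (OncGL2 k)) (ΔH k)).toLinearMap := by
    rw [← AlgHom.toLinearMap_id (R := k) (A := OncGL2 k)]; exact tmap_eq k _ _
  have e3 : ∀ u, (TensorProduct.assoc k (OncGL2 k) (OncGL2 k) (OncGL2 k)) u
      = Algebra.TensorProduct.assoc k k k (OncGL2 k) (OncGL2 k) (OncGL2 k) u := fun _ => rfl
  simp only [e1, e2, AlgHom.toLinearMap_apply]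
  refine hopf_induction k ?_ ?_ ?_ ?_
  · intro r
    simp [e3, AlgHom.commutes, AlgEquiv.commutes, Algebra.TensorProduct.algebraMap_apply, Algebra.TensorProduct.one_def]
  · intro g
    cases g <;>
      (simp [e3, ΔH_gg, Δval, TensorProduct.add_tmul, TensorProduct.tmul_add]) <;> abel
  · intro x y hx hy
    simp only [map_add, e3] at *
    rw [hx, hy]
  · intro x y hx hy
    simp only [map_mul, e3] at *
    rw [hx, hy]

/-! ### Counit axioms -/

theorem counitL : ∀ x, (TensorProduct.lid k (OncGL2 k))
      (TensorProduct.map (εH k).toLinearMap LinearMap.id (ΔH k x)) = x := by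
  have e1 : TensorProduct.map (εH k).toLinearMap LinearMap.id
      = (Algebra.TensorProduct.map (εH k) (AlgHom.id k (OncGL2 k))).toLinearMap := by
    rw [← AlgHom.toLinearMap_id (R := k) (A := OncGL2 k)]; exact tmap_eq k _ _
  have e2 : ∀ u : k ⊗[k] OncGL2 k, (TensorProduct.lid k (OncGL2 k)) u
      = Algebra.TensorProduct.lid k (OncGL2 k) u := fun _ => rfl
  simp only [e1, AlgHom.toLinearMap_apply]
  refine hopf_induction k ?_ ?_ ?_ ?_
  · intro r
    simp [e2, AlgHom.commutes, AlgEquiv.commutes, Algebra.TensorProduct.algebraMap_apply, Algebra.algebraMap_eq_smul_one]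
  · intro g
    cases g <;> simp [e2, ΔH_gg, Δval, εH_gg, εval]
  · intro x y hx hy
    simp only [map_add, e2] at *
    rw [hx, hy]
  · intro x y hx hy
    simp only [map_mul, e2] at *
    rw [hx, hy]

theorem counitR : ∀ x, (TensorProduct.rid k (OncGL2 k))
      (TensorProduct.map LinearMap.id (εH k).toLinearMap (ΔH k x)) = x := by
  have e1 : TensorProduct.map LinearMap.id (εH k).toLinearMap
      = (Algebra.TensorProduct.map (AlgHom.id k (OncGL2 k)) (εH k)).toLinearMap := by
    rw [← AlgHom.toLinearMap_id (R := k) (A := OncGL2 k)]; exact tmap_eq k _ _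
  have e2 : ∀ u : OncGL2 k ⊗[k] k, (TensorProduct.rid k (OncGL2 k)) u
      = Algebra.TensorProduct.rid k k (OncGL2 k) u := by
    intro u
    induction u using TensorProduct.induction_on with
    | zero => simp
    | tmul x r => simp
    | add u v hu hv => simp [map_add, hu, hv]
  simp only [e1, AlgHom.toLinearMap_apply]
  refine hopf_induction k ?_ ?_ ?_ ?_
  · intro r
    simp [e2, AlgHom.commutes, AlgEquiv.commutes, Algebra.TensorProduct.algebraMap_apply, Algebra.algebraMap_eq_smul_one]
  · intro g
    cases g <;> simp [e2, ΔH_gg, Δval, εH_gg, εval]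
  · intro x y hx hy
    simp only [map_add, e2] at *
    rw [hx, hy]
  · intro x y hx hy
    simp only [map_mul, e2] at *
    rw [hx, hy]

/-! ### Antipode axioms -/

theorem keyL (p q : OncGL2 k) (u : OncGL2 k ⊗[k] OncGL2 k) :
    LinearMap.mul' k (OncGL2 k) (TensorProduct.map (SH k) LinearMap.id (u * (p ⊗ₜ q)))
      = SH k p * LinearMap.mul' k (OncGL2 k) (TensorProduct.map (SH k) LinearMap.id u) * q := by
  induction u using TensorProduct.induction_on with
  | zero => simp
  | tmul x y =>
    simp only [Algebra.TensorProduct.tmul_mul_tmul, TensorProduct.map_tmul,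
      LinearMap.mul'_apply, LinearMap.id_coe, id_eq, SH_anti]
    simp [mul_assoc]
  | add u v hu hv =>
    simp only [add_mul, map_add, hu, hv, mul_add]

theorem keyR (x y : OncGL2 k) (v : OncGL2 k ⊗[k] OncGL2 k) :
    LinearMap.mul' k (OncGL2 k) (TensorProduct.map LinearMap.id (SH k) ((x ⊗ₜ y) * v))
      = x * LinearMap.mul' k (OncGL2 k) (TensorProduct.map LinearMap.id (SH k) v) * SH k y := by
  induction v using TensorProduct.induction_on with
  | zero => simp
  | tmul p q =>
    simp only [Algebra.TensorProduct.tmul_mul_tmul, TensorProduct.map_tmul,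
      LinearMap.mul'_apply, LinearMap.id_coe, id_eq, SH_anti]
    simp [mul_assoc]
  | add u v hu hv =>
    simp only [mul_add, map_add, hu, hv, mul_add, add_mul]

theorem antipodeL : ∀ x, LinearMap.mul' k (OncGL2 k)
      (TensorProduct.map (SH k) LinearMap.id (ΔH k x)) = algebraMap k (OncGL2 k) (εH k x) := by
  refine hopf_induction k ?_ ?_ ?_ ?_
  · intro r
    rw [AlgHom.commutes, AlgHom.commutes, Algebra.TensorProduct.algebraMap_apply]
    simp [SH_algebraMap]
  · intro g
    cases g <;>
      simp only [ΔH_gg, Δval, εH_gg, εval, map_add, TensorProduct.map_tmul,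
        LinearMap.mul'_apply, LinearMap.id_coe, id_eq, SH_gg, Sval, MulOpposite.unop_op,
        map_one, map_zero, Hneg_mul, Hmul_neg, Hmul_assoc]
    case a =>
      rw [Hadd_neg, ← Hmul_sub, h4, h6]
    case b =>
      rw [Hadd_neg, ← Hmul_sub, h2, Hsub_self, Hmul_zero]
    case c =>
      rw [h1, Hneg_add_cancel]
    case d =>
      rw [h3', Hmul_add, h6, Hneg_add_cancel_left]
    case del => exact h6 k
    case delInv => exact h5 k
  · intro x y hx hy
    simp [map_add, hx, hy]
  · intro x y hx hy
    rw [map_mul]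
    have step : ∀ v : OncGL2 k ⊗[k] OncGL2 k,
        LinearMap.mul' k (OncGL2 k) (TensorProduct.map (SH k) LinearMap.id (ΔH k x * v))
          = algebraMap k (OncGL2 k) (εH k x)
            * LinearMap.mul' k (OncGL2 k) (TensorProduct.map (SH k) LinearMap.id v) := by
      intro v
      induction v using TensorProduct.induction_on with
      | zero => simp
      | tmul p q =>
        rw [keyL, hx,
          show SH k p * algebraMap k (OncGL2 k) (εH k x) = algebraMap k (OncGL2 k) (εH k x) * SH k p
            from (Algebra.commutes _ _).symm, mul_assoc]
        simp [LinearMap.mul'_apply]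
      | add u v hu hv =>
        simp only [mul_add, map_add, hu, hv]
    rw [step (ΔH k y), hy, ← map_mul, ← map_mul]

theorem antipodeR : ∀ x, LinearMap.mul' k (OncGL2 k)
      (TensorProduct.map LinearMap.id (SH k) (ΔH k x)) = algebraMap k (OncGL2 k) (εH k x) := by
  refine hopf_induction k ?_ ?_ ?_ ?_
  · intro r
    rw [AlgHom.commutes, AlgHom.commutes, Algebra.TensorProduct.algebraMap_apply]
    simp [SH_one]
  · intro g
    cases g <;>
      simp only [ΔH_gg, Δval, εH_gg, εval, map_add, TensorProduct.map_tmul,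
        LinearMap.mul'_apply, LinearMap.id_coe, id_eq, SH_gg, Sval, MulOpposite.unop_op,
        map_one, map_zero, Hneg_mul, Hmul_neg, Hmul_assoc]
    case a =>
      rw [Hadd_neg, h7]
    case b =>
      rw [h9, Hneg_add_cancel]
    case c =>
      rw [h10, Hadd_neg_cancel]
    case d =>
      rw [h8', Hneg_add_cancel_left]
    case del => exact h5 k
    case delInv => exact h6 k
  · intro x y hx hy
    simp [map_add, hx, hy]
  · intro x y hx hy
    rw [map_mul]
    have step : ∀ u : OncGL2 k ⊗[k] OncGL2 k,
        LinearMap.mul' k (OncGL2 k) (TensorProduct.map LinearMap.id (SH k) (u * ΔH k y))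
          = algebraMap k (OncGL2 k) (εH k y)
            * LinearMap.mul' k (OncGL2 k) (TensorProduct.map LinearMap.id (SH k) u) := by
      intro u
      induction u using TensorProduct.induction_on with
      | zero => simp
      | tmul p q =>
        rw [keyR, hy,
          show p * algebraMap k (OncGL2 k) (εH k y) = algebraMap k (OncGL2 k) (εH k y) * p
            from (Algebra.commutes _ _).symm, mul_assoc]
        simp [LinearMap.mul'_apply]
      | add u v hu hv =>
        simp only [add_mul, map_add, hu, hv, mul_add]
    rw [step (ΔH k x), hx, ← map_mul, mul_comm (εH k y) (εH k x), ← map_mul]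

end GL2HopfAux

end GL2HopfAux


/-- `O_nc(GL₂)` carries a Hopf algebra structure: there exist an
algebra morphism `Δ : H → H ⊗ H` (the comultiplication), an algebra morphism
`ε : H → k` (the counit) and a linear map `S : H → H` (the antipode) which is a
unital algebra anti-homomorphism, satisfying coassociativity, the counit axioms
and the antipode axioms, with the prescribed values on the generators:
`Δ(M) = M ⊗ M`, `Δ(δ^{±1}) = δ^{±1} ⊗ δ^{±1}`, `ε(M) = Id`, `ε(δ^{±1}) = 1`,
`S(a) = δ⁻¹d`, `S(b) = −δ⁻¹b`, `S(c) = −δ⁻¹c`, `S(d) = δ⁻¹a`, `S(δ^{±1}) = δ^{∓1}`. -/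
theorem OncGL2_hopfAlgebra (k : Type) [Field k] :
    ∃ (Δ : OncGL2 k →ₐ[k] OncGL2 k ⊗[k] OncGL2 k) (ε : OncGL2 k →ₐ[k] k)
      (S : OncGL2 k →ₗ[k] OncGL2 k),
      -- coassociativity
      (∀ x, (TensorProduct.assoc k (OncGL2 k) (OncGL2 k) (OncGL2 k))
          (TensorProduct.map Δ.toLinearMap LinearMap.id (Δ x))
        = TensorProduct.map LinearMap.id Δ.toLinearMap (Δ x)) ∧
      -- counit axioms
      (∀ x, (TensorProduct.lid k (OncGL2 k))
          (TensorProduct.map ε.toLinearMap LinearMap.id (Δ x)) = x) ∧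
      (∀ x, (TensorProduct.rid k (OncGL2 k))
          (TensorProduct.map LinearMap.id ε.toLinearMap (Δ x)) = x) ∧
      -- `S` is a unital algebra anti-homomorphism
      S 1 = 1 ∧ (∀ x y, S (x * y) = S y * S x) ∧
      -- antipode axioms
      (∀ x, LinearMap.mul' k (OncGL2 k)
          (TensorProduct.map S LinearMap.id (Δ x)) = algebraMap k (OncGL2 k) (ε x)) ∧
      (∀ x, LinearMap.mul' k (OncGL2 k)
          (TensorProduct.map LinearMap.id S (Δ x)) = algebraMap k (OncGL2 k) (ε x)) ∧
      -- values of `Δ` on the generators: `Δ(M) = M ⊗ M`, `Δ(δ^{±1}) = δ^{±1} ⊗ δ^{±1}`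
      Δ (gg k a) = gg k a ⊗ₜ gg k a + gg k b ⊗ₜ gg k c ∧
      Δ (gg k b) = gg k a ⊗ₜ gg k b + gg k b ⊗ₜ gg k d ∧
      Δ (gg k c) = gg k c ⊗ₜ gg k a + gg k d ⊗ₜ gg k c ∧
      Δ (gg k d) = gg k c ⊗ₜ gg k b + gg k d ⊗ₜ gg k d ∧
      Δ (gg k del) = gg k del ⊗ₜ gg k del ∧
      Δ (gg k delInv) = gg k delInv ⊗ₜ gg k delInv ∧
      -- values of `ε` on the generators
      ε (gg k a) = 1 ∧ ε (gg k b) = 0 ∧ ε (gg k c) = 0 ∧ ε (gg k d) = 1 ∧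
      ε (gg k del) = 1 ∧ ε (gg k delInv) = 1 ∧
      -- values of `S` on the generators
      S (gg k a) = gg k delInv * gg k d ∧
      S (gg k b) = -(gg k delInv * gg k b) ∧
      S (gg k c) = -(gg k delInv * gg k c) ∧
      S (gg k d) = gg k delInv * gg k a ∧
      S (gg k del) = gg k delInv ∧
      S (gg k delInv) = gg k del := by
  refine ⟨GL2HopfAux.ΔH k, GL2HopfAux.εH k, GL2HopfAux.SH k,
    GL2HopfAux.coassoc k, GL2HopfAux.counitL k, GL2HopfAux.counitR k,
    GL2HopfAux.SH_one k, GL2HopfAux.SH_anti k,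
    GL2HopfAux.antipodeL k, GL2HopfAux.antipodeR k,
    GL2HopfAux.ΔH_gg k GL2Gen.a, GL2HopfAux.ΔH_gg k GL2Gen.b,
    GL2HopfAux.ΔH_gg k GL2Gen.c, GL2HopfAux.ΔH_gg k GL2Gen.d,
    GL2HopfAux.ΔH_gg k GL2Gen.del, GL2HopfAux.ΔH_gg k GL2Gen.delInv,
    GL2HopfAux.εH_gg k GL2Gen.a, GL2HopfAux.εH_gg k GL2Gen.b,
    GL2HopfAux.εH_gg k GL2Gen.c, GL2HopfAux.εH_gg k GL2Gen.d,
    GL2HopfAux.εH_gg k GL2Gen.del, GL2HopfAux.εH_gg k GL2Gen.delInv,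
    GL2HopfAux.SH_gg k GL2Gen.a, GL2HopfAux.SH_gg k GL2Gen.b,
    GL2HopfAux.SH_gg k GL2Gen.c, GL2HopfAux.SH_gg k GL2Gen.d,
    GL2HopfAux.SH_gg k GL2Gen.del, GL2HopfAux.SH_gg k GL2Gen.delInv⟩
end

section
/- Let V be the 2-dimensional left comodule over H = O_nc(GL₂) with basis e₁, e₂ and coaction e₁ ↦ a⊗e₁ + b⊗e₂, e₂ ↦ c⊗e₁ + d⊗e₂, and let R^{-1} be the one-dimensional comodule k·r^{-1} with coaction r^{-1} ↦ δ^{-1} ⊗ r^{-1}. Then V has a right dual V* ≅ V ⊗ R^{-1} in the monoidal category of H-comodules, with evaluation V⊗R^{-1}⊗V → k sending e₁r^{-1}e₂ ↦ −1, e₂r^{-1}e₁ ↦ 1, e₁r^{-1}e₁ ↦ 0, e₂r^{-1}e₂ ↦ 0, and coevaluation k → V⊗V⊗R^{-1} sending 1 ↦ (e₁e₂ − e₂e₁)r^{-1}; i.e. both zig-zag composites are the identity and both structure maps are comodule morphisms. -/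
open TensorProduct

open GL2Gen

namespace GL2Rel

variable (k : Type) [Field k]

local notation "ι" => FreeAlgebra.ι k (X := GL2Gen)

end GL2Rel

variable (k : Type) [Field k]

/-- A two-dimensional vector space with basis `e₀, e₁` (Pi.single). -/
abbrev V2 (k : Type) [Field k] : Type := Fin 2 → k

/-- The coaction on a 2-dimensional comodule determined by the matrix `m`:
`eᵢ ↦ ∑ⱼ m i j ⊗ eⱼ`. -/
noncomputable def rhoOf (m : Fin 2 → Fin 2 → OncGL2 k) :
    V2 k →ₗ[k] OncGL2 k ⊗[k] V2 k :=
  ∑ i : Fin 2, ∑ j : Fin 2,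
    (TensorProduct.mk k (OncGL2 k) (V2 k) (m i j)).comp
      ((LinearMap.proj i : V2 k →ₗ[k] k).smulRight (Pi.single j 1))

/-- The coaction of the standard comodule `V`: `e₁ ↦ a⊗e₁ + b⊗e₂`, `e₂ ↦ c⊗e₁ + d⊗e₂`. -/
noncomputable def rhoV : V2 k →ₗ[k] OncGL2 k ⊗[k] V2 k :=
  rhoOf k (fun i j => gg k (match i, j with
    | 0, 0 => GL2Gen.a | 0, 1 => GL2Gen.b | 1, 0 => GL2Gen.c | 1, 1 => GL2Gen.d))

/-- The coaction of `W = V ⊗ R⁻¹` with basis `fᵢ = eᵢ ⊗ r⁻¹`: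
`f₁ ↦ aδ⁻¹⊗f₁ + bδ⁻¹⊗f₂`, `f₂ ↦ cδ⁻¹⊗f₁ + dδ⁻¹⊗f₂`. -/
noncomputable def rhoW : V2 k →ₗ[k] OncGL2 k ⊗[k] V2 k :=
  rhoOf k (fun i j => (gg k (match i, j with
    | 0, 0 => GL2Gen.a | 0, 1 => GL2Gen.b | 1, 0 => GL2Gen.c | 1, 1 => GL2Gen.d))
      * gg k GL2Gen.delInv)

/-- The tensor-product coaction on `X ⊗ Y`: `x⊗y ↦ x₍₋₁₎y₍₋₁₎ ⊗ (x₍₀₎ ⊗ y₍₀₎)`. -/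
noncomputable def rhoTensor (X Y : Type) [AddCommGroup X] [Module k X]
    [AddCommGroup Y] [Module k Y]
    (ρX : X →ₗ[k] OncGL2 k ⊗[k] X) (ρY : Y →ₗ[k] OncGL2 k ⊗[k] Y) :
    X ⊗[k] Y →ₗ[k] OncGL2 k ⊗[k] (X ⊗[k] Y) :=
  (TensorProduct.map (LinearMap.mul' k (OncGL2 k)) LinearMap.id).comp
    ((TensorProduct.tensorTensorTensorComm k (OncGL2 k) X (OncGL2 k) Y).toLinearMap.comp
      (TensorProduct.map ρX ρY))

/-- The evaluation `W ⊗ V → k`: `f₁⊗e₂ ↦ −1`, `f₂⊗e₁ ↦ 1`, `f₁⊗e₁, f₂⊗e₂ ↦ 0`. -/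
noncomputable def evWV : V2 k ⊗[k] V2 k →ₗ[k] k :=
  TensorProduct.lift (LinearMap.mk₂ k (fun w v : V2 k => w 1 * v 0 - w 0 * v 1)
    (fun w w' v => by simp [Pi.add_apply]; ring)
    (fun s w v => by simp [Pi.smul_apply, smul_eq_mul]; ring)
    (fun w v v' => by simp [Pi.add_apply]; ring)
    (fun s w v => by simp [Pi.smul_apply, smul_eq_mul]; ring))

/-- The coevaluation `k → V ⊗ W`: `1 ↦ e₁⊗f₂ − e₂⊗f₁` (i.e. `(e₁e₂ − e₂e₁)r⁻¹`). -/
noncomputable def coevVW : k →ₗ[k] V2 k ⊗[k] V2 k :=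
  LinearMap.toSpanSingleton k _
    ((Pi.single 0 1 : V2 k) ⊗ₜ[k] (Pi.single 1 1 : V2 k)
      - (Pi.single 1 1 : V2 k) ⊗ₜ[k] (Pi.single 0 1 : V2 k))



section Helpers
variable (k : Type) [Field k]

lemma gg_rel {x y : FreeAlgebra k GL2Gen} (h : GL2Rel.rel k x y) :
    RingQuot.mkAlgHom k (GL2Rel.rel k) x = RingQuot.mkAlgHom k (GL2Rel.rel k) y :=
  RingQuot.mkAlgHom_rel k h

lemma rel_ac : gg k a * gg k c = gg k c * gg k a := by
  simpa [gg, map_mul] using gg_rel k GL2Rel.rel.ac_comm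

lemma rel_bd : gg k b * gg k d = gg k d * gg k b := by
  simpa [gg, map_mul] using gg_rel k GL2Rel.rel.bd_comm

lemma rel_det1 : gg k a * gg k d - gg k c * gg k b = gg k del := by
  simpa [gg, map_mul, map_sub] using gg_rel k GL2Rel.rel.det1

lemma rel_det2 : gg k d * gg k a - gg k b * gg k c = gg k del := by
  simpa [gg, map_mul, map_sub] using gg_rel k GL2Rel.rel.det2

lemma rel_delInv1 : gg k del * gg k delInv = 1 := by
  simpa [gg, map_mul, map_one] using gg_rel k GL2Rel.rel.delInv1

lemma rel_anti1 : gg k a * gg k delInv * gg k d - gg k b * gg k delInv * gg k c = 1 := by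
  simpa [gg, map_mul, map_sub, map_one] using gg_rel k GL2Rel.rel.anti1

lemma rel_anti2 : gg k d * gg k delInv * gg k a - gg k c * gg k delInv * gg k b = 1 := by
  simpa [gg, map_mul, map_sub, map_one] using gg_rel k GL2Rel.rel.anti2

lemma rel_anti3 : gg k b * gg k delInv * gg k a - gg k a * gg k delInv * gg k b = 0 := by
  simpa [gg, map_mul, map_sub] using gg_rel k GL2Rel.rel.anti3

lemma rel_anti4 : gg k c * gg k delInv * gg k d - gg k d * gg k delInv * gg k c = 0 := by
  simpa [gg, map_mul, map_sub] using gg_rel k GL2Rel.rel.anti4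

lemma rhoOf_single (m : Fin 2 → Fin 2 → OncGL2 k) (i : Fin 2) :
    rhoOf k m (Pi.single i 1) =
      m i 0 ⊗ₜ[k] (Pi.single 0 1 : V2 k) + m i 1 ⊗ₜ[k] (Pi.single 1 1 : V2 k) := by
  fin_cases i <;>
    simp [rhoOf, Fin.sum_univ_two, LinearMap.smulRight_apply, Pi.single_apply,
      TensorProduct.mk_apply]

end Helpers

section Main
variable (k : Type) [Field k]

lemma V2_decomp (v : V2 k) :
    v = v 0 • (Pi.single 0 1 : V2 k) + v 1 • (Pi.single 1 1 : V2 k) := by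
  ext i; fin_cases i <;> simp

lemma ext_V2V2 {P : Type} [AddCommGroup P] [Module k P]
    (f g : V2 k ⊗[k] V2 k →ₗ[k] P)
    (h : ∀ i j : Fin 2,
      f ((Pi.single i 1 : V2 k) ⊗ₜ[k] (Pi.single j 1 : V2 k))
        = g ((Pi.single i 1 : V2 k) ⊗ₜ[k] (Pi.single j 1 : V2 k))) : f = g := by
  apply TensorProduct.ext'
  intro x y
  rw [V2_decomp k x, V2_decomp k y]
  simp only [TensorProduct.add_tmul, TensorProduct.tmul_add, ← TensorProduct.smul_tmul',
    TensorProduct.tmul_smul, map_add, map_smul, h]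

lemma aux_tri1 :
    ((TensorProduct.rid k (V2 k)).toLinearMap.comp
      ((TensorProduct.map LinearMap.id (evWV k)).comp
        ((TensorProduct.assoc k (V2 k) (V2 k) (V2 k)).toLinearMap.comp
          ((TensorProduct.map (coevVW k) LinearMap.id).comp
            (TensorProduct.lid k (V2 k)).symm.toLinearMap)))
      = LinearMap.id) := by
  apply LinearMap.ext
  intro v
  rw [V2_decomp k v]
  simp only [LinearMap.comp_apply, LinearEquiv.coe_coe, LinearMap.id_apply,
    TensorProduct.lid_symm_apply, map_add, map_smul, TensorProduct.map_tmul,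
    coevVW, LinearMap.toSpanSingleton_apply, one_smul,
    TensorProduct.sub_tmul, TensorProduct.add_tmul, map_sub,
    TensorProduct.assoc_tmul, evWV, TensorProduct.lift.tmul, LinearMap.mk₂_apply,
    TensorProduct.rid_tmul, Pi.single_apply]
  ext i
  fin_cases i <;> simp


lemma aux_tri2 :
    ((TensorProduct.lid k (V2 k)).toLinearMap.comp
      ((TensorProduct.map (evWV k) LinearMap.id).comp
        ((TensorProduct.assoc k (V2 k) (V2 k) (V2 k)).symm.toLinearMap.comp
          ((TensorProduct.map LinearMap.id (coevVW k)).comp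
            (TensorProduct.rid k (V2 k)).symm.toLinearMap)))
      = LinearMap.id) := by
  apply LinearMap.ext
  intro v
  rw [V2_decomp k v]
  simp only [LinearMap.comp_apply, LinearEquiv.coe_coe, LinearMap.id_apply,
    TensorProduct.rid_symm_apply, map_add, map_smul, TensorProduct.map_tmul,
    coevVW, LinearMap.toSpanSingleton_apply, one_smul,
    TensorProduct.tmul_sub, TensorProduct.tmul_add, map_sub,
    TensorProduct.assoc_symm_tmul, evWV, TensorProduct.lift.tmul, LinearMap.mk₂_apply,
    TensorProduct.lid_tmul, Pi.single_apply]
  ext i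
  fin_cases i <;> simp

lemma aux_ev :
    ((TensorProduct.map LinearMap.id (evWV k)).comp
        (rhoTensor k (V2 k) (V2 k) (rhoW k) (rhoV k))
      = (TensorProduct.mk k (OncGL2 k) k 1).comp (evWV k)) := by
  apply ext_V2V2 k (P := OncGL2 k ⊗[k] k)
  intro i j
  fin_cases i <;> fin_cases j <;>
    simp only [LinearMap.comp_apply, rhoTensor, rhoV, rhoW, rhoOf_single,
      TensorProduct.map_tmul, LinearMap.id_apply, TensorProduct.add_tmul,
      TensorProduct.tmul_add, map_add, LinearEquiv.coe_coe,
      TensorProduct.tensorTensorTensorComm_tmul, LinearMap.mul'_apply,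
      evWV, TensorProduct.lift.tmul, LinearMap.mk₂_apply, Pi.single_apply,
      TensorProduct.mk_apply]
  all_goals norm_num [TensorProduct.tmul_neg, TensorProduct.tmul_zero, Fin.ext_iff]
  · rw [← sub_eq_add_neg (G := OncGL2 k ⊗[k] k), ← TensorProduct.sub_tmul, rel_anti3, TensorProduct.zero_tmul]
  · rw [← sub_eq_add_neg (G := OncGL2 k ⊗[k] k), ← TensorProduct.sub_tmul, ← neg_sub, rel_anti1,
      TensorProduct.neg_tmul]
  · rw [← sub_eq_add_neg (G := OncGL2 k ⊗[k] k), ← TensorProduct.sub_tmul, rel_anti2]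
  · rw [← sub_eq_add_neg (G := OncGL2 k ⊗[k] k), ← TensorProduct.sub_tmul, ← neg_sub, rel_anti4, neg_zero,
      TensorProduct.zero_tmul]

lemma aux_coev :
    ((rhoTensor k (V2 k) (V2 k) (rhoV k) (rhoW k)).comp (coevVW k)
      = (TensorProduct.map LinearMap.id (coevVW k)).comp
          (TensorProduct.mk k (OncGL2 k) k 1)) := by
  apply LinearMap.ext_ring
  simp only [LinearMap.comp_apply, rhoTensor, coevVW, LinearMap.toSpanSingleton_apply,
    one_smul, map_sub, TensorProduct.map_tmul, LinearMap.id_apply, rhoV, rhoW,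
    rhoOf_single, TensorProduct.add_tmul, TensorProduct.tmul_add, map_add,
    LinearEquiv.coe_coe, TensorProduct.tensorTensorTensorComm_tmul,
    LinearMap.mul'_apply, TensorProduct.mk_apply, TensorProduct.tmul_sub]
  have h00 : gg k a * (gg k c * gg k delInv) = gg k c * (gg k a * gg k delInv) := by
    rw [← mul_assoc, ← mul_assoc, rel_ac]
  have h11 : gg k b * (gg k d * gg k delInv) = gg k d * (gg k b * gg k delInv) := by
    rw [← mul_assoc, ← mul_assoc, rel_bd]
  have h01 : gg k a * (gg k d * gg k delInv) - gg k c * (gg k b * gg k delInv) = 1 := by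
    rw [← mul_assoc, ← mul_assoc, ← sub_mul, rel_det1, rel_delInv1]
  have h10 : gg k d * (gg k a * gg k delInv) - gg k b * (gg k c * gg k delInv) = 1 := by
    rw [← mul_assoc, ← mul_assoc, ← sub_mul, rel_det2, rel_delInv1]
  have e1 : (1 : OncGL2 k) ⊗ₜ[k] ((Pi.single 0 1 : V2 k) ⊗ₜ[k] (Pi.single 1 1 : V2 k))
      = (gg k a * (gg k d * gg k delInv)) ⊗ₜ[k]
          ((Pi.single 0 1 : V2 k) ⊗ₜ[k] (Pi.single 1 1 : V2 k))
        - (gg k c * (gg k b * gg k delInv)) ⊗ₜ[k]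
          ((Pi.single 0 1 : V2 k) ⊗ₜ[k] (Pi.single 1 1 : V2 k)) := by
    rw [← TensorProduct.sub_tmul, h01]
  have e2 : (1 : OncGL2 k) ⊗ₜ[k] ((Pi.single 1 1 : V2 k) ⊗ₜ[k] (Pi.single 0 1 : V2 k))
      = (gg k d * (gg k a * gg k delInv)) ⊗ₜ[k]
          ((Pi.single 1 1 : V2 k) ⊗ₜ[k] (Pi.single 0 1 : V2 k))
        - (gg k b * (gg k c * gg k delInv)) ⊗ₜ[k]
          ((Pi.single 1 1 : V2 k) ⊗ₜ[k] (Pi.single 0 1 : V2 k)) := by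
    rw [← TensorProduct.sub_tmul, h10]
  rw [e1, e2, h00, h11]
  abel


/-
    simp [rhoTensorX, rhoV, rhoW, rhoOf_single, TensorProduct.add_tmul,
      TensorProduct.tmul_add, TensorProduct.map_tmul,
      TensorProduct.tensorTensorTensorComm_tmul, LinearMap.mul'_apply,
      evWV, TensorProduct.lift.tmul, LinearMap.mk₂_apply, Pi.single_apply]
-/
end Main

/-- `W = V ⊗ R⁻¹` is a right dual of the standard comodule `V`
of `O_nc(GL₂)`: the indicated evaluation and coevaluation are comodule morphisms
and satisfy the two triangle (zig-zag) identities. -/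
theorem V_has_right_dual (k : Type) [Field k] :
    -- `ev` is a morphism of comodules
    ((TensorProduct.map LinearMap.id (evWV k)).comp
        (rhoTensor k (V2 k) (V2 k) (rhoW k) (rhoV k))
      = (TensorProduct.mk k (OncGL2 k) k 1).comp (evWV k)) ∧
    -- `coev` is a morphism of comodules
    ((rhoTensor k (V2 k) (V2 k) (rhoV k) (rhoW k)).comp (coevVW k)
      = (TensorProduct.map LinearMap.id (coevVW k)).comp
          (TensorProduct.mk k (OncGL2 k) k 1)) ∧
    -- first triangle identity on `V`
    ((TensorProduct.rid k (V2 k)).toLinearMap.comp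
      ((TensorProduct.map LinearMap.id (evWV k)).comp
        ((TensorProduct.assoc k (V2 k) (V2 k) (V2 k)).toLinearMap.comp
          ((TensorProduct.map (coevVW k) LinearMap.id).comp
            (TensorProduct.lid k (V2 k)).symm.toLinearMap)))
      = LinearMap.id) ∧
    -- second triangle identity on `W`
    ((TensorProduct.lid k (V2 k)).toLinearMap.comp
      ((TensorProduct.map (evWV k) LinearMap.id).comp
        ((TensorProduct.assoc k (V2 k) (V2 k) (V2 k)).symm.toLinearMap.comp
          ((TensorProduct.map LinearMap.id (coevVW k)).comp
            (TensorProduct.rid k (V2 k)).symm.toLinearMap)))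
      = LinearMap.id) :=
  ⟨aux_ev k, aux_coev k, aux_tri1 k, aux_tri2 k⟩
end
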